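/- Fix k ≥ 2 and β ∈ (0, ∞), and define f(x₁,…,x_{k-1}) = -(1/2)·log(1 - ((1 - e^{-β})/2^{k-1})·∏_{i=1}^{k-1}(1 - tanh x_i)). If x₁,…,x_n ≥ 0 (for some n ≤ k-1), then for every index i, 0 ≤ -∂f/∂x_i(x₁,…,x_{k-1}) ≤ 2^{-n}. -/

import Mathlib

private lemma tanh_lt_one' (t : ℝ) : Real.tanh t < 1 := by
  rw [Real.tanh_eq_sinh_div_cosh, div_lt_one (Real.cosh_pos t), Real.sinh_eq, Real.cosh_eq]
  have := Real.exp_pos (-t)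
  linarith

private lemma neg_one_lt_tanh' (t : ℝ) : -1 < Real.tanh t := by
  rw [Real.tanh_eq_sinh_div_cosh, lt_div_iff₀ (Real.cosh_pos t), Real.sinh_eq, Real.cosh_eq]
  have := Real.exp_pos t
  linarith

private lemma tanh_nonneg' {t : ℝ} (ht : 0 ≤ t) : 0 ≤ Real.tanh t := by
  rw [Real.tanh_eq_sinh_div_cosh]
  apply div_nonneg _ (Real.cosh_pos t).le
  rw [Real.sinh_eq]
  have : Real.exp (-t) ≤ Real.exp t := Real.exp_le_exp.mpr (by linarith)
  linarith

private lemma hasDerivAt_tanh' (t : ℝ) :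
    HasDerivAt Real.tanh (1 - Real.tanh t ^ 2) t := by
  have h := (Real.hasDerivAt_sinh t).div (Real.hasDerivAt_cosh t) (Real.cosh_pos t).ne'
  have hfun : Real.tanh = fun y => Real.sinh y / Real.cosh y :=
    funext fun y => Real.tanh_eq_sinh_div_cosh y
  rw [hfun]
  refine h.congr_deriv ?_
  have hc := (Real.cosh_pos t).ne'
  have hid := Real.cosh_sq_sub_sinh_sq t
  beta_reduce
  field_simp

private lemma card_filter_not_lt (m n : ℕ) (hn : n ≤ m) :
    ((Finset.univ : Finset (Fin m)).filter fun j : Fin m => ¬ (j : ℕ) < n).card = m - n := by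
  have h1 : ((Finset.univ : Finset (Fin m)).filter fun j : Fin m => (j : ℕ) < n)
      = (Finset.univ : Finset (Fin n)).map (Fin.castLEEmb hn) := by
    ext j
    simp only [Finset.mem_filter, Finset.mem_univ, true_and, Finset.mem_map,
      Fin.castLEEmb, Function.Embedding.coeFn_mk]
    constructor
    · intro hj
      exact ⟨⟨(j : ℕ), hj⟩, Fin.ext (by simp [Fin.coe_castLE])⟩
    · rintro ⟨a, rfl⟩
      simpa [Fin.coe_castLE] using a.2
  have h2 := Finset.card_filter_add_card_filter_not
    (s := (Finset.univ : Finset (Fin m))) (p := fun j : Fin m => (j : ℕ) < n)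
  rw [h1, Finset.card_map, Finset.card_univ, Fintype.card_fin, Finset.card_univ,
    Fintype.card_fin] at h2
  omega

set_option maxHeartbeats 1000000 in
theorem bp_update_deriv_bound (k : ℕ) (hk : 2 ≤ k) (β : ℝ) (hβ : 0 < β)
    (f : (Fin (k - 1) → ℝ) → ℝ)
    (hf : ∀ x, f x =
      -(1 / 2) * Real.log (1 - ((1 - Real.exp (-β)) / 2 ^ (k - 1)) *
        ∏ i, (1 - Real.tanh (x i))))
    (n : ℕ) (hn : n ≤ k - 1) (x : Fin (k - 1) → ℝ)
    (hx : ∀ j : Fin (k - 1), (j : ℕ) < n → 0 ≤ x j) :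
    ∀ i : Fin (k - 1),
      0 ≤ -deriv (fun t => f (Function.update x i t)) (x i) ∧
      -deriv (fun t => f (Function.update x i t)) (x i) ≤ 1 / 2 ^ n := by
  intro i
  set c : ℝ := (1 - Real.exp (-β)) / 2 ^ (k - 1) with hc_def
  set Q : ℝ := ∏ j ∈ Finset.univ.erase i, (1 - Real.tanh (x j)) with hQ_def
  have hQpos : 0 < Q := Finset.prod_pos fun j _ => by linarith [tanh_lt_one' (x j)]
  have hexp : Real.exp (-β) < 1 := Real.exp_lt_one_iff.mpr (by linarith)
  have hexp0 := Real.exp_pos (-β)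
  have hc_pos : 0 < c := div_pos (by linarith) (by positivity)
  have hc_le : c ≤ 1 / 2 ^ (k - 1) := by
    rw [hc_def, div_le_div_iff₀ (by positivity) (by positivity)]
    nlinarith [pow_pos (two_pos : (0:ℝ) < 2) (k-1)]
  -- rewrite the one-variable function
  have hfun : (fun t => f (Function.update x i t))
      = fun t => -(1 / 2) * Real.log (1 - c * ((1 - Real.tanh t) * Q)) := by
    funext t
    rw [hf]
    have h2 : (fun j => 1 - Real.tanh (Function.update x i t j))
        = Function.update (fun j => 1 - Real.tanh (x j)) i (1 - Real.tanh t) := by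
      funext j
      by_cases hj : j = i
      · subst hj; simp
      · simp [Function.update_apply, hj]
    rw [show (∏ j, (1 - Real.tanh (Function.update x i t j)))
        = (1 - Real.tanh t) * Q by
      rw [show (fun j => 1 - Real.tanh (Function.update x i t j)) = _ from h2,
        Finset.prod_update_of_mem (Finset.mem_univ i), hQ_def, Finset.erase_eq]]
  -- product upper bound
  have hQ_le : Q ≤ 2 ^ (((Finset.univ.erase i).filter fun j : Fin (k-1) => ¬ (j : ℕ) < n).card) := by
    calc Q ≤ ∏ j ∈ Finset.univ.erase i, (if (j : ℕ) < n then (1 : ℝ) else 2) := by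
          apply Finset.prod_le_prod
          · intro j _; linarith [tanh_lt_one' (x j)]
          · intro j _
            by_cases hj : (j : ℕ) < n
            · simp only [hj, if_true]
              linarith [tanh_nonneg' (hx j hj)]
            · simp only [hj, if_false]
              linarith [neg_one_lt_tanh' (x j)]
      _ = 2 ^ (((Finset.univ.erase i).filter fun j : Fin (k-1) => ¬ (j : ℕ) < n).card) := by
          rw [Finset.prod_ite (fun _ => (1:ℝ)) (fun _ => (2:ℝ))]
          simp [Finset.prod_const]
  have hfe : ((Finset.univ.erase i).filter fun j : Fin (k-1) => ¬ (j : ℕ) < n)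
      = ((Finset.univ : Finset (Fin (k-1))).filter fun j : Fin (k-1) => ¬ (j : ℕ) < n).erase i := by
    ext j
    simp only [Finset.mem_filter, Finset.mem_erase, Finset.mem_univ, true_and]
    tauto
  have hcard_all := card_filter_not_lt (k-1) n hn
  -- bound on q := c * Q, by cases
  have hq : ((i : ℕ) < n ∧ c * Q ≤ 1 / 2 ^ n) ∨ (¬ (i : ℕ) < n ∧ c * Q ≤ 1 / 2 ^ (n+1)) := by
    by_cases hi : (i : ℕ) < n
    · left
      refine ⟨hi, ?_⟩
      have hnotmem : i ∉ ((Finset.univ : Finset (Fin (k-1))).filter fun j : Fin (k-1) => ¬ (j : ℕ) < n) := by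
        simp [hi]
      have hcard : (((Finset.univ.erase i).filter fun j : Fin (k-1) => ¬ (j : ℕ) < n)).card = (k-1) - n := by
        rw [hfe, Finset.erase_eq_of_notMem hnotmem, hcard_all]
      have hQ2 : Q ≤ 2 ^ ((k-1) - n) := by rw [← hcard]; exact hQ_le
      have hmul : c * Q ≤ (1 / 2 ^ (k-1)) * 2 ^ ((k-1) - n) :=
        mul_le_mul hc_le hQ2 hQpos.le (by positivity)
      have heq : (1 / (2:ℝ) ^ (k-1)) * 2 ^ ((k-1) - n) = 1 / 2 ^ n := by
        rw [div_mul_eq_mul_div, one_mul, div_eq_div_iff (by positivity) (by positivity)]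
        rw [← pow_add]
        norm_num
        congr 1
        omega
      linarith
    · right
      refine ⟨hi, ?_⟩
      have hmem : i ∈ ((Finset.univ : Finset (Fin (k-1))).filter fun j : Fin (k-1) => ¬ (j : ℕ) < n) := by
        simp only [Finset.mem_filter, Finset.mem_univ, true_and]
        exact hi
      have hik : (i : ℕ) < k - 1 := i.2
      have hcard : (((Finset.univ.erase i).filter fun j : Fin (k-1) => ¬ (j : ℕ) < n)).card
          = (k-1) - (n+1) := by
        rw [hfe, Finset.card_erase_of_mem hmem, hcard_all]
        omega
      have hQ2 : Q ≤ 2 ^ ((k-1) - (n+1)) := by rw [← hcard]; exact hQ_le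
      have hmul : c * Q ≤ (1 / 2 ^ (k-1)) * 2 ^ ((k-1) - (n+1)) :=
        mul_le_mul hc_le hQ2 hQpos.le (by positivity)
      have heq : (1 / (2:ℝ) ^ (k-1)) * 2 ^ ((k-1) - (n+1)) = 1 / 2 ^ (n+1) := by
        rw [div_mul_eq_mul_div, one_mul, div_eq_div_iff (by positivity) (by positivity)]
        rw [← pow_add]
        norm_num
        congr 1
        omega
      linarith
  -- abbreviations
  set a : ℝ := 1 - Real.tanh (x i) with ha_def
  have hta := tanh_lt_one' (x i)
  have htb := neg_one_lt_tanh' (x i)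
  have ha0 : 0 < a := by rw [ha_def]; linarith
  have ha2 : a < 2 := by rw [ha_def]; linarith
  set q : ℝ := c * Q with hq_def
  have hq0 : 0 < q := mul_pos hc_pos hQpos
  clear_value c Q a q
  have he0 : (0:ℝ) < 1 / 2 ^ n := by positivity
  -- positivity of the log argument
  have hu : 0 < 1 - c * ((1 - Real.tanh (x i)) * Q) := by
    have hqa : c * ((1 - Real.tanh (x i)) * Q) = q * a := by rw [hq_def, ha_def]; ring
    rw [hqa]
    rcases hq with ⟨hi, hqe⟩ | ⟨hi, hqe⟩
    · have ha1 : a ≤ 1 := by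
        rw [ha_def]; linarith [tanh_nonneg' (hx i hi)]
      have hn1 : 1 ≤ n := by omega
      have he12 : (1:ℝ) / 2 ^ n ≤ 1 / 2 := by
        apply div_le_div_of_nonneg_left (by norm_num) (by norm_num)
        calc (2:ℝ) = 2 ^ 1 := by norm_num
          _ ≤ 2 ^ n := pow_le_pow_right₀ (by norm_num) hn1
      nlinarith
    · have he12 : (1:ℝ) / 2 ^ (n+1) ≤ 1 / 2 := by
        apply div_le_div_of_nonneg_left (by norm_num) (by norm_num)
        calc (2:ℝ) = 2 ^ 1 := by norm_num
          _ ≤ 2 ^ (n+1) := pow_le_pow_right₀ (by norm_num) (by omega)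
      nlinarith
  -- compute the derivative
  have hT := hasDerivAt_tanh' (x i)
  have hA : HasDerivAt (fun t => 1 - c * ((1 - Real.tanh t) * Q))
      (-(c * ((-(1 - Real.tanh (x i) ^ 2)) * Q))) (x i) :=
    ((((hT.const_sub 1).mul_const Q).const_mul c).const_sub 1)
  have hlog := (hA.log hu.ne').const_mul (-(1/2 : ℝ))
  have hD : deriv (fun t => f (Function.update x i t)) (x i)
      = -(1/2 : ℝ) * ((-(c * ((-(1 - Real.tanh (x i) ^ 2)) * Q)))
          / (1 - c * ((1 - Real.tanh (x i)) * Q))) := by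
    rw [hfun]
    exact hlog.deriv
  rw [hD]
  have hApos : 0 < 1 - Real.tanh (x i) ^ 2 := by nlinarith
  have hN : -(c * ((-(1 - Real.tanh (x i) ^ 2)) * Q)) = q * (a * (2 - a)) := by
    rw [hq_def, ha_def]; ring
  have hU : 1 - c * ((1 - Real.tanh (x i)) * Q) = 1 - q * a := by
    rw [hq_def, ha_def]; ring
  rw [hN, hU]
  have hval : -(-(1/2 : ℝ) * (q * (a * (2 - a)) / (1 - q * a)))
      = (1/2 : ℝ) * (q * (a * (2 - a)) / (1 - q * a)) := by ring
  rw [hval]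
  have hu' : 0 < 1 - q * a := by rw [← hU]; exact hu
  constructor
  · apply mul_nonneg (by norm_num)
    apply div_nonneg _ hu'.le
    nlinarith
  · have h2e : q * (a * (2 - a)) / (1 - q * a) ≤ 2 * (1 / 2 ^ n) := by
      rw [div_le_iff₀ hu']
      rcases hq with ⟨hi, hqe⟩ | ⟨hi, hqe⟩
      · have ha1 : a ≤ 1 := by
          rw [ha_def]; linarith [tanh_nonneg' (hx i hi)]
        have hn1 : 1 ≤ n := by omega
        have he12 : (1:ℝ) / 2 ^ n ≤ 1 / 2 := by
          apply div_le_div_of_nonneg_left (by norm_num) (by norm_num)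
          calc (2:ℝ) = 2 ^ 1 := by norm_num
            _ ≤ 2 ^ n := pow_le_pow_right₀ (by norm_num) hn1
        nlinarith [sq_nonneg (1 - a), mul_nonneg hq0.le (sq_nonneg (1 - a))]
      · have heq2 : (1:ℝ) / 2 ^ (n+1) = (1 / 2 ^ n) / 2 := by
          rw [pow_succ]; ring
        rw [heq2] at hqe
        have he1 : (1:ℝ) / 2 ^ n ≤ 1 := by
          rw [div_le_one (by positivity)]
          have := pow_le_pow_right₀ (by norm_num : (1:ℝ) ≤ 2) (Nat.zero_le n)
          simpa using this
        nlinarith [sq_nonneg (a - 2), mul_nonneg (sub_nonneg.2 hqe)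
            (mul_nonneg ha0.le (by linarith : (0:ℝ) ≤ 2 * (1/2^n) + 2 - a)),
          mul_nonneg he0.le (sq_nonneg (a - 2))]
    linarith [h2e]
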